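/- arXiv:2107.04783 — 4 statements merged into one kernel-verified Lean document; each statement's English description precedes it below -/
import Mathlib

section
/- Let Γ and Δ = {1,…,d} be finite sets, K ≤ Sym(Γ), L ≤ Sym(Δ), m ≥ 2 an integer, and k = min{k_m, d}, where k_m is the number of orbits of K in its componentwise action on Γ^m. Then K^(m) ↑ L^[k] ≤ (K↑L)^(m). -/
open Equiv MulAction Pointwise

/-- The `m`-closure of a permutation group `G ≤ Sym(Ω)`: the largest subgroup of `Sym(Ω)`
having the same orbits as `G` in the induced componentwise action on `Ω^m`. -/
def mClosure {Ω : Type*} (m : ℕ) (G : Subgroup (Equiv.Perm Ω)) : Subgroup (Equiv.Perm Ω) :=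
  sSup {H : Subgroup (Equiv.Perm Ω) |
    ∀ α : Fin m → Ω, MulAction.orbit H α = MulAction.orbit G α}

/-- An ordered partition of `Ω` into at most `m` nonempty classes. -/
structure OrderedPartition (Ω : Type*) (m : ℕ) where
  classes : List (Set Ω)
  length_le : classes.length ≤ m
  nonempty : ∀ s ∈ classes, s.Nonempty
  pairwise_disjoint : classes.Pairwise Disjoint
  covers : ∀ x : Ω, ∃ s ∈ classes, x ∈ s

namespace OrderedPartition

variable {Ω : Type*} {m : ℕ}

theorem ext' {P Q : OrderedPartition Ω m} (h : P.classes = Q.classes) : P = Q := by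
  cases P; cases Q; simpa using h

/-- The natural action of a permutation on an ordered partition, classwise. -/
def act (f : Equiv.Perm Ω) (P : OrderedPartition Ω m) : OrderedPartition Ω m where
  classes := P.classes.map fun s => f '' s
  length_le := by simpa using P.length_le
  nonempty := by
    intro s hs
    obtain ⟨t, ht, rfl⟩ := List.mem_map.mp hs
    exact (P.nonempty t ht).image _
  pairwise_disjoint :=
    P.pairwise_disjoint.map _ fun s t h => (Set.disjoint_image_iff f.injective).mpr h
  covers := by
    intro x
    obtain ⟨s, hs, hx⟩ := P.covers (f⁻¹ x)
    exact ⟨f '' s, List.mem_map.mpr ⟨s, hs, rfl⟩, f⁻¹ x, hx, by simp⟩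

instance : SMul (Equiv.Perm Ω) (OrderedPartition Ω m) := ⟨act⟩

theorem smul_classes (f : Equiv.Perm Ω) (P : OrderedPartition Ω m) :
    (f • P).classes = P.classes.map fun s => f '' s := rfl

instance : MulAction (Equiv.Perm Ω) (OrderedPartition Ω m) where
  one_smul P := ext' (by simp [smul_classes])
  mul_smul f g P := ext' (by
    simp [smul_classes, List.map_map, Function.comp_def, Set.image_image])

end OrderedPartition

/-- The partition `m`-closure `G^[m]` of a permutation group `G ≤ Sym(Ω)`: the largest
subgroup of `Sym(Ω)` having the same orbits as `G` in its induced action on the set of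
ordered partitions of `Ω` into at most `m` nonempty classes. -/
def partClosure {Ω : Type*} (m : ℕ) (G : Subgroup (Equiv.Perm Ω)) : Subgroup (Equiv.Perm Ω) :=
  sSup {H : Subgroup (Equiv.Perm Ω) |
    ∀ P : OrderedPartition Ω m, MulAction.orbit H P = MulAction.orbit G P}

/-- The element `(g_1, …, g_d; ḡ)` of the wreath product in product action:
`(ω^g)_i = (ω_{i^{ḡ⁻¹}})^{g_{i^{ḡ⁻¹}}}`. -/
def wreathElem {Γ Δ : Type*} (gs : Δ → Equiv.Perm Γ) (σ : Equiv.Perm Δ) :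
    Equiv.Perm (Δ → Γ) where
  toFun ω i := gs (σ⁻¹ i) (ω (σ⁻¹ i))
  invFun ω i := (gs i)⁻¹ (ω (σ i))
  left_inv ω := by funext i; simp
  right_inv ω := by funext i; simp

theorem wreathElem_apply {Γ Δ : Type*} (gs : Δ → Equiv.Perm Γ) (σ : Equiv.Perm Δ)
    (ω : Δ → Γ) (i : Δ) : wreathElem gs σ ω i = gs (σ⁻¹ i) (ω (σ⁻¹ i)) := rfl

theorem wreathElem_one {Γ Δ : Type*} :
    wreathElem (fun _ : Δ => (1 : Equiv.Perm Γ)) 1 = 1 := by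
  refine Equiv.ext fun ω => funext fun i => ?_
  simp [wreathElem_apply]

theorem wreathElem_mul {Γ Δ : Type*} (gs hs : Δ → Equiv.Perm Γ) (σ τ : Equiv.Perm Δ) :
    wreathElem gs σ * wreathElem hs τ = wreathElem (fun j => gs (τ j) * hs j) (σ * τ) := by
  refine Equiv.ext fun ω => funext fun i => ?_
  simp [wreathElem_apply, Equiv.Perm.mul_apply, mul_inv_rev]

theorem wreathElem_inv {Γ Δ : Type*} (gs : Δ → Equiv.Perm Γ) (σ : Equiv.Perm Δ) :
    (wreathElem gs σ)⁻¹ = wreathElem (fun j => (gs (σ⁻¹ j))⁻¹) σ⁻¹ := by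
  rw [inv_eq_iff_mul_eq_one, wreathElem_mul]
  simpa using wreathElem_one

/-- The wreath product `K ↑ L` of `K ≤ Sym(Γ)` and `L ≤ Sym(Δ)` in product action,
as a subgroup of `Sym(Γ^Δ)`. -/
def wreathProduct {Γ Δ : Type*} (K : Subgroup (Equiv.Perm Γ)) (L : Subgroup (Equiv.Perm Δ)) :
    Subgroup (Equiv.Perm (Δ → Γ)) where
  carrier := {h | ∃ (gs : Δ → Equiv.Perm Γ) (σ : Equiv.Perm Δ),
    (∀ i, gs i ∈ K) ∧ σ ∈ L ∧ h = wreathElem gs σ}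
  one_mem' := ⟨fun _ => 1, 1, fun _ => K.one_mem, L.one_mem, wreathElem_one.symm⟩
  mul_mem' := by
    rintro f h ⟨gs, σ, hgs, hσ, rfl⟩ ⟨hs, τ, hhs, hτ, rfl⟩
    exact ⟨fun j => gs (τ j) * hs j, σ * τ, fun j => K.mul_mem (hgs _) (hhs _),
      L.mul_mem hσ hτ, wreathElem_mul gs hs σ τ⟩
  inv_mem' := by
    rintro f ⟨gs, σ, hgs, hσ, rfl⟩
    exact ⟨fun j => (gs (σ⁻¹ j))⁻¹, σ⁻¹, fun j => K.inv_mem (hgs _), L.inv_mem hσ,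
      wreathElem_inv gs σ⟩

/-- `k_m`: the number of orbits of `K ≤ Sym(Γ)` in its componentwise action on `Γ^m`. -/
noncomputable def numOrbits {Γ : Type*} (m : ℕ) (K : Subgroup (Equiv.Perm Γ)) : ℕ :=
  Nat.card (MulAction.orbitRel.Quotient K (Fin m → Γ))

/-- A permutation group `L ≤ Sym(Δ)` is primitive if it is transitive and preserves
no nontrivial partition of `Δ` (partitions being identified with equivalence relations). -/
def IsPrimitiveSubgroup {Δ : Type*} (L : Subgroup (Equiv.Perm Δ)) : Prop :=
  (∀ x y : Δ, ∃ g ∈ L, g x = y) ∧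
  ∀ r : Setoid Δ, (∀ g ∈ L, ∀ x y : Δ, r.r x y → r.r (g x) (g y)) → r = ⊥ ∨ r = ⊤

/-- The direct product `K × L ≤ Sym(Γ × Δ)` acting coordinatewise on `Γ × Δ`. -/
def prodSubgroup {Γ Δ : Type*} (K : Subgroup (Equiv.Perm Γ)) (L : Subgroup (Equiv.Perm Δ)) :
    Subgroup (Equiv.Perm (Γ × Δ)) where
  carrier := {h | ∃ k ∈ K, ∃ l ∈ L, h = Equiv.prodCongr k l}
  one_mem' := ⟨1, K.one_mem, 1, L.one_mem, Equiv.ext fun x => rfl⟩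
  mul_mem' := by
    rintro f h ⟨k₁, hk₁, l₁, hl₁, rfl⟩ ⟨k₂, hk₂, l₂, hl₂, rfl⟩
    exact ⟨k₁ * k₂, K.mul_mem hk₁ hk₂, l₁ * l₂, L.mul_mem hl₁ hl₂, Equiv.ext fun x => rfl⟩
  inv_mem' := by
    rintro f ⟨k, hk, l, hl, rfl⟩
    exact ⟨k⁻¹, K.inv_mem hk, l⁻¹, L.inv_mem hl, Equiv.ext fun x => rfl⟩

/-- Given an enumeration (via `sIdx`) of the orbits of `K` on `Γ^m` by `Fin a`,
and `α ∈ Ω^m` with `Ω = Γ^d` viewed as a `d × m` matrix with rows `α[i] = (j ↦ α j i)`,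
`piClasses sIdx α` is the ordered partition `Π(α)` of `Δ = Fin d` whose `ℓ`-th class
consists of the `i` whose row `α[i]` lies in the orbit with the `ℓ`-th smallest
occurring index. -/
def piClasses {Γ : Type*} {d m a : ℕ} (sIdx : (Fin m → Γ) → Fin a)
    (α : Fin m → (Fin d → Γ)) : List (Set (Fin d)) :=
  ((Finset.univ.image fun i : Fin d => sIdx fun j => α j i).sort (· ≤ ·)).map
    fun t => {i : Fin d | sIdx (fun j => α j i) = t}

def closedSupergroup {Ω : Type*} (X : Type*) [MulAction (Equiv.Perm Ω) X]
    (G : Subgroup (Equiv.Perm Ω)) : Subgroup (Equiv.Perm Ω) where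
  carrier := {f | ∀ x : X, f • x ∈ MulAction.orbit G x}
  one_mem' := fun x => by simpa using MulAction.mem_orbit_self x
  mul_mem' := by
    intro f g hf hg x
    obtain ⟨u, hu⟩ := hg x
    have h1 := hf (u • x)
    rw [MulAction.orbit_smul] at h1
    rw [mul_smul, ← hu]
    exact h1
  inv_mem' := by
    intro f hf x
    obtain ⟨u, hu⟩ := hf (f⁻¹ • x)
    rw [smul_inv_smul] at hu
    have h2 : (u⁻¹ : _) • x = f⁻¹ • x := by rw [inv_smul_eq_iff]; exact hu.symm
    exact h2 ▸ MulAction.mem_orbit x u⁻¹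

theorem smul_mem_orbit_of_mem_sSup {Ω : Type*} (X : Type*) [MulAction (Equiv.Perm Ω) X]
    (G : Subgroup (Equiv.Perm Ω)) {f : Equiv.Perm Ω}
    (hf : f ∈ sSup {H : Subgroup (Equiv.Perm Ω) |
      ∀ x : X, MulAction.orbit H x = MulAction.orbit G x}) (x : X) :
    f • x ∈ MulAction.orbit G x := by
  have hle : sSup {H : Subgroup (Equiv.Perm Ω) |
      ∀ x : X, MulAction.orbit H x = MulAction.orbit G x} ≤ closedSupergroup X G := by
    refine sSup_le fun H hH f hf x => ?_
    rw [← hH x]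
    exact ⟨⟨f, hf⟩, rfl⟩
  exact hle hf x

theorem le_sSup_sameOrbits {Ω : Type*} (X : Type*) [MulAction (Equiv.Perm Ω) X]
    (G : Subgroup (Equiv.Perm Ω)) :
    G ≤ sSup {H : Subgroup (Equiv.Perm Ω) |
      ∀ x : X, MulAction.orbit H x = MulAction.orbit G x} :=
  le_sSup fun _ => rfl

theorem wreathProduct_mono {Γ Δ : Type*} {K K' : Subgroup (Equiv.Perm Γ)}
    {L L' : Subgroup (Equiv.Perm Δ)} (hK : K ≤ K') (hL : L ≤ L') :
    wreathProduct K L ≤ wreathProduct K' L' := by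
  rintro f ⟨gs, σ, hgs, hσ, rfl⟩
  exact ⟨gs, σ, fun i => hK (hgs i), hL hσ, rfl⟩

theorem key_lemma {Γ : Type*} [Fintype Γ] {d m : ℕ}
    (K : Subgroup (Equiv.Perm Γ)) (L : Subgroup (Equiv.Perm (Fin d)))
    (gs : Fin d → Equiv.Perm Γ) (σ : Equiv.Perm (Fin d))
    (hgs : ∀ i, gs i ∈ mClosure m K)
    (hσ : σ ∈ partClosure (min (numOrbits m K) d) L)
    (α : Fin m → (Fin d → Γ)) :
    wreathElem gs σ • α ∈ MulAction.orbit (wreathProduct K L) α := by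
  classical
  let e : MulAction.orbitRel.Quotient K (Fin m → Γ) ≃ Fin (numOrbits m K) :=
    (Finite.equivFin _)
  let sIdx : (Fin m → Γ) → Fin (numOrbits m K) := fun x => e (Quotient.mk'' x)
  have hsIdx : ∀ x y, sIdx x = sIdx y ↔ x ∈ MulAction.orbit K y := by
    intro x y
    rw [show (sIdx x = sIdx y) ↔ (Quotient.mk'' x : MulAction.orbitRel.Quotient K _)
        = Quotient.mk'' y from e.apply_eq_iff_eq, Quotient.eq'']
    exact MulAction.orbitRel_apply
  have hCmem : ∀ i : Fin d,
      {i' : Fin d | sIdx (fun j => α j i') = sIdx (fun j => α j i)} ∈ piClasses sIdx α := by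
    intro i
    simp only [piClasses, List.mem_map]
    exact ⟨_, (Finset.mem_sort _).mpr (Finset.mem_image_of_mem _ (Finset.mem_univ i)), rfl⟩
  let P : OrderedPartition (Fin d) (min (numOrbits m K) d) :=
    { classes := piClasses sIdx α
      length_le := by
        rw [piClasses, List.length_map, Finset.length_sort]
        exact le_min (le_trans (Finset.card_le_univ _) (by simp))
          (le_trans Finset.card_image_le (by simp))
      nonempty := by
        intro s hs
        simp only [piClasses, List.mem_map] at hs
        obtain ⟨t, ht, rfl⟩ := hs
        rw [Finset.mem_sort, Finset.mem_image] at ht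
        obtain ⟨i, -, rfl⟩ := ht
        exact ⟨i, rfl⟩
      pairwise_disjoint := by
        have hnd := Finset.sort_nodup
          (Finset.univ.image fun i : Fin d => sIdx fun j => α j i) (· ≤ ·)
        exact List.Pairwise.map _ (fun t t' htt' => Set.disjoint_left.mpr
          fun i hi hi' => htt' (hi.symm.trans hi')) hnd
      covers := fun i => ⟨_, hCmem i, rfl⟩ }
  obtain ⟨τ, hτP⟩ := smul_mem_orbit_of_mem_sSup (OrderedPartition (Fin d)
    (min (numOrbits m K) d)) L hσ P
  have hcls : ∀ s ∈ P.classes, (τ : Equiv.Perm (Fin d)) '' s = σ '' s := by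
    have h : ((τ : Equiv.Perm (Fin d)) • P).classes = (σ • P).classes :=
      congrArg OrderedPartition.classes hτP
    rw [OrderedPartition.smul_classes, OrderedPartition.smul_classes,
      List.map_inj_left] at h
    exact h
  have hfix : ∀ i, sIdx (fun j => α j (σ⁻¹ ((τ : Equiv.Perm (Fin d)) i)))
      = sIdx (fun j => α j i) := by
    intro i
    have h := hcls _ (hCmem i)
    have hmem : (τ : Equiv.Perm (Fin d)) i ∈ (τ : Equiv.Perm (Fin d)) ''
        {i' : Fin d | sIdx (fun j => α j i') = sIdx (fun j => α j i)} := ⟨i, rfl, rfl⟩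
    rw [h] at hmem
    obtain ⟨i', hi', hσi'⟩ := hmem
    have hieq : i' = σ⁻¹ ((τ : Equiv.Perm (Fin d)) i) := by
      rw [← hσi']; simp
    rwa [← hieq]
  have horb : ∀ i : Fin d, ∃ u : K,
      u • (fun j => α j i)
        = gs (σ⁻¹ ((τ : Equiv.Perm (Fin d)) i)) • fun j => α j (σ⁻¹ ((τ : Equiv.Perm (Fin d)) i)) := by
    intro i
    have h1 := smul_mem_orbit_of_mem_sSup (Fin m → Γ) K (hgs (σ⁻¹ ((τ : Equiv.Perm (Fin d)) i)))
      (fun j => α j (σ⁻¹ ((τ : Equiv.Perm (Fin d)) i)))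
    have h2 : (fun j => α j (σ⁻¹ ((τ : Equiv.Perm (Fin d)) i)))
        ∈ MulAction.orbit K (fun j => α j i) := (hsIdx _ _).mp (hfix i)
    rw [MulAction.orbit_eq_iff.mpr h2] at h1
    exact h1
  choose c hc using horb
  refine ⟨⟨wreathElem (fun i => (c i : Equiv.Perm Γ)) (τ : Equiv.Perm (Fin d)),
    fun i => (c i : Equiv.Perm Γ), (τ : Equiv.Perm (Fin d)),
    fun i => (c i).2, τ.2, rfl⟩, ?_⟩
  show wreathElem (fun i => (c i : Equiv.Perm Γ)) (τ : Equiv.Perm (Fin d)) • α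
    = wreathElem gs σ • α
  funext j i
  have hji := congrFun (hc ((τ : Equiv.Perm (Fin d))⁻¹ i)) j
  simp only [Submonoid.smul_def, Pi.smul_apply, Equiv.Perm.smul_def,
    Equiv.Perm.inv_def, Equiv.apply_symm_apply, Subgroup.smul_def] at hji
  show wreathElem (fun i => (c i : Equiv.Perm Γ)) (τ : Equiv.Perm (Fin d)) (α j) i
    = wreathElem gs σ (α j) i
  rw [wreathElem_apply, wreathElem_apply]
  simpa using hji

/-- `K^(m) ↑ L^[k] ≤ (K↑L)^(m)`, where `k = min{k_m, d}`. -/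
theorem wreathProduct_le_mClosure {Γ : Type*} [Fintype Γ] {d : ℕ}
    (K : Subgroup (Equiv.Perm Γ)) (L : Subgroup (Equiv.Perm (Fin d)))
    (m : ℕ) (hm : 2 ≤ m) :
    wreathProduct (mClosure m K) (partClosure (min (numOrbits m K) d) L) ≤
      mClosure m (wreathProduct K L) := by
  apply le_sSup
  intro α
  apply Set.Subset.antisymm
  · rintro x ⟨⟨w, hw⟩, rfl⟩
    obtain ⟨gs, σ, hgs, hσ, rfl⟩ := hw
    exact key_lemma K L gs σ hgs hσ α
  · rintro x ⟨⟨w, hw⟩, rfl⟩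
    exact ⟨⟨w, wreathProduct_mono (le_sSup_sameOrbits (Fin m → Γ) K)
      (le_sSup_sameOrbits (OrderedPartition (Fin d) (min (numOrbits m K) d)) L) hw⟩, rfl⟩
end

section
/- Let Γ and Δ = {1,…,d} be finite sets, K ≤ Sym(Γ), L ≤ Sym(Δ), m ≥ 2 an integer, and k = min{k_m, d}, where k_m is the number of orbits of K in its componentwise action on Γ^m. Let 1 denote the trivial subgroup of Sym(Γ). Then 1 ↑ L^[k] ≤ (K↑L)^(m). -/
open Equiv MulAction Pointwise

section Aux

/-- aux: the subgroup of all elements moving every point of `X` within its `G`-orbit. -/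
def sameOrbitSubgroup {Gr : Type*} [Group Gr] (X : Type*) [MulAction Gr X]
    (G : Subgroup Gr) : Subgroup Gr where
  carrier := {f | ∀ x : X, f • x ∈ MulAction.orbit G x}
  one_mem' := fun x => by simpa using MulAction.mem_orbit_self x
  mul_mem' := by
    intro f h hf hh x
    have h2 := hf (h • x)
    rw [MulAction.orbit_eq_iff.mpr (hh x)] at h2
    rw [mul_smul]; exact h2
  inv_mem' := by
    intro f hf x
    have := hf (f⁻¹ • x)
    rw [smul_inv_smul] at this
    exact MulAction.mem_orbit_symm.mpr this

theorem mem_sameOrbitSubgroup_iff {Gr : Type*} [Group Gr] (X : Type*) [MulAction Gr X]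
    (G : Subgroup Gr) (f : Gr) :
    f ∈ sameOrbitSubgroup X G ↔ ∀ x : X, f • x ∈ MulAction.orbit G x := Iff.rfl

theorem le_sameOrbitSubgroup {Gr : Type*} [Group Gr] (X : Type*) [MulAction Gr X]
    (G : Subgroup Gr) : G ≤ sameOrbitSubgroup X G :=
  fun g hg x => MulAction.mem_orbit x (⟨g, hg⟩ : G)

theorem sameOrbit_orbit_eq {Gr : Type*} [Group Gr] (X : Type*) [MulAction Gr X]
    (G : Subgroup Gr) (x : X) :
    MulAction.orbit (sameOrbitSubgroup X G) x = MulAction.orbit G x := by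
  apply Set.Subset.antisymm
  · rintro _ ⟨⟨f, hf⟩, rfl⟩; exact hf x
  · rintro _ ⟨⟨g, hg⟩, rfl⟩
    exact ⟨⟨g, le_sameOrbitSubgroup X G hg⟩, rfl⟩

theorem sameOrbitSubgroup_le_mClosure {Ω : Type*} (m : ℕ) (G : Subgroup (Equiv.Perm Ω)) :
    sameOrbitSubgroup (Fin m → Ω) G ≤ mClosure m G :=
  le_sSup (fun α => sameOrbit_orbit_eq (Fin m → Ω) G α)

theorem partClosure_le_sameOrbitSubgroup {Ω : Type*} (k : ℕ) (L : Subgroup (Equiv.Perm Ω)) :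
    partClosure k L ≤ sameOrbitSubgroup (OrderedPartition Ω k) L := by
  refine sSup_le ?_
  rintro H hH σ hσ P
  rw [← hH P]
  exact MulAction.mem_orbit P (⟨σ, hσ⟩ : H)

end Aux

section Aux2

open OrderedPartition in
/-- The ordered partition `Π(α)` built from `piClasses`. -/
def piPartition {Γ : Type*} {d m a : ℕ} (sIdx : (Fin m → Γ) → Fin a)
    (α : Fin m → (Fin d → Γ)) : OrderedPartition (Fin d) (min a d) where
  classes := piClasses sIdx α
  length_le := by
    rw [piClasses, List.length_map, Finset.length_sort]
    refine le_min ?_ ?_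
    · simpa using Finset.card_le_univ (Finset.univ.image fun i : Fin d => sIdx fun j => α j i)
    · calc (Finset.univ.image fun i : Fin d => sIdx fun j => α j i).card
          ≤ (Finset.univ : Finset (Fin d)).card := Finset.card_image_le
        _ = d := by simp
  nonempty := by
    intro s hs
    rw [piClasses] at hs
    obtain ⟨t, ht, rfl⟩ := List.mem_map.mp hs
    rw [Finset.mem_sort] at ht
    obtain ⟨i, _, hi⟩ := Finset.mem_image.mp ht
    exact ⟨i, hi⟩
  pairwise_disjoint := by
    refine List.Pairwise.map _ ?_ (Finset.sort_nodup _ _)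
    intro t t' hne
    rw [Set.disjoint_left]
    rintro i hi hi'
    exact hne (hi ▸ hi' ▸ rfl)
  covers := fun i =>
    ⟨_, List.mem_map_of_mem
      ((Finset.mem_sort _).mpr (Finset.mem_image_of_mem _ (Finset.mem_univ i))), rfl⟩

theorem piPartition_classes {Γ : Type*} {d m a : ℕ} (sIdx : (Fin m → Γ) → Fin a)
    (α : Fin m → (Fin d → Γ)) : (piPartition sIdx α).classes = piClasses sIdx α := rfl

theorem mem_piClasses_self {Γ : Type*} {d m a : ℕ} (sIdx : (Fin m → Γ) → Fin a)
    (α : Fin m → (Fin d → Γ)) (i : Fin d) :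
    {i' : Fin d | sIdx (fun j => α j i') = sIdx (fun j => α j i)} ∈ piClasses sIdx α :=
  List.mem_map_of_mem
    ((Finset.mem_sort _).mpr (Finset.mem_image_of_mem _ (Finset.mem_univ i)))

end Aux2

theorem list_map_eq_map {α β : Type*} {f g : α → β} :
    ∀ {l : List α}, List.map f l = List.map g l → ∀ a ∈ l, f a = g a
  | [], _, a, ha => by simp at ha
  | x :: l, h, a, ha => by
      simp only [List.map_cons, List.cons.injEq] at h
      rcases List.mem_cons.mp ha with rfl | ha
      · exact h.1
      · exact list_map_eq_map h.2 a ha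

/-- `1 ↑ L^[k] ≤ (K↑L)^(m)`, where `1` is the trivial subgroup of `Sym(Γ)` and
`k = min{k_m, d}`. -/
theorem one_wreath_partClosure_le_mClosure {Γ : Type*} [Fintype Γ] {d : ℕ}
    (K : Subgroup (Equiv.Perm Γ)) (L : Subgroup (Equiv.Perm (Fin d)))
    (m : ℕ) (hm : 2 ≤ m) :
    wreathProduct (⊥ : Subgroup (Equiv.Perm Γ)) (partClosure (min (numOrbits m K) d) L) ≤
      mClosure m (wreathProduct K L) := by
  classical
  haveI : Fintype (MulAction.orbitRel.Quotient K (Fin m → Γ)) := Fintype.ofFinite _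
  have hcard : Fintype.card (MulAction.orbitRel.Quotient K (Fin m → Γ)) = numOrbits m K := by
    rw [numOrbits, Nat.card_eq_fintype_card]
  set a := numOrbits m K with ha
  let e : MulAction.orbitRel.Quotient K (Fin m → Γ) ≃ Fin a := Fintype.equivFinOfCardEq hcard
  let sIdx : (Fin m → Γ) → Fin a := fun x => e (Quotient.mk'' x)
  have hsIdx : ∀ x y : Fin m → Γ, sIdx x = sIdx y ↔ x ∈ MulAction.orbit K y := by
    intro x y
    rw [show (sIdx x = sIdx y) ↔
        (Quotient.mk'' x : MulAction.orbitRel.Quotient K (Fin m → Γ)) = Quotient.mk'' y from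
      e.injective.eq_iff, Quotient.eq'']
    exact MulAction.orbitRel_apply
  rintro f ⟨gs, σ, hgs, hσ, rfl⟩
  have hgs1 : gs = fun _ => (1 : Equiv.Perm Γ) := funext fun i => by
    simpa [Subgroup.mem_bot] using hgs i
  subst hgs1
  apply sameOrbitSubgroup_le_mClosure
  intro α
  obtain ⟨τ, hτP⟩ := partClosure_le_sameOrbitSubgroup (min a d) L hσ (piPartition sIdx α)
  have h1 : (((τ : Equiv.Perm (Fin d)) • piPartition sIdx α).classes : List (Set (Fin d)))
      = (σ • piPartition sIdx α).classes := congrArg OrderedPartition.classes hτP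
  rw [OrderedPartition.smul_classes, OrderedPartition.smul_classes, piPartition_classes] at h1
  have hcls := list_map_eq_map h1
  have key : ∀ i : Fin d, sIdx (fun j => α j (σ⁻¹ ((τ : Equiv.Perm (Fin d)) i)))
      = sIdx (fun j => α j i) := by
    intro i
    have h2 := hcls _ (mem_piClasses_self sIdx α i)
    have h3 : (τ : Equiv.Perm (Fin d)) i ∈ (τ : Equiv.Perm (Fin d)) ''
        {i' : Fin d | sIdx (fun j => α j i') = sIdx (fun j => α j i)} :=
      Set.mem_image_of_mem _ rfl
    rw [h2] at h3
    obtain ⟨i', hi', hE⟩ := h3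
    have h4 : σ⁻¹ ((τ : Equiv.Perm (Fin d)) i) = i' := by rw [← hE]; simp
    rw [h4]; exact hi'
  have hks : ∀ i : Fin d, ∃ kk : Equiv.Perm Γ, kk ∈ K ∧
      ∀ j, kk (α j i) = α j (σ⁻¹ ((τ : Equiv.Perm (Fin d)) i)) := by
    intro i
    obtain ⟨k, hk⟩ := (hsIdx _ _).mp (key i)
    refine ⟨(k : Equiv.Perm Γ), k.2, fun j => ?_⟩
    have h5 := congrFun hk j
    simpa [Subgroup.smul_def, Submonoid.smul_def, Pi.smul_apply, Equiv.Perm.smul_def] using h5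
  choose ks hksK hksEq using hks
  refine ⟨⟨wreathElem ks (τ : Equiv.Perm (Fin d)),
    ⟨ks, (τ : Equiv.Perm (Fin d)), hksK, τ.2, rfl⟩⟩, ?_⟩
  show wreathElem ks (τ : Equiv.Perm (Fin d)) • α = wreathElem (fun _ => 1) σ • α
  funext j
  show wreathElem ks (τ : Equiv.Perm (Fin d)) (α j) = wreathElem (fun _ => 1) σ (α j)
  funext i
  rw [wreathElem_apply, wreathElem_apply]
  have h6 := hksEq ((τ : Equiv.Perm (Fin d))⁻¹ i) j
  simp only [Equiv.Perm.inv_def, Equiv.apply_symm_apply] at h6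
  simpa using h6
end

section
/- Let Γ and Δ = {1,…,d} be finite sets, K ≤ Sym(Γ), L ≤ Sym(Δ), m ≥ 2 an integer, and k = min{k_m, d}, where k_m is the number of orbits of K in its componentwise action on Γ^m. If h ∈ (K↑L)^(m), written in the form h = (h_1,…,h_d; h̄) with h_1,…,h_d ∈ Sym(Γ) and h̄ ∈ Sym(Δ), then h̄ ∈ L^[k]. -/
open Equiv MulAction Pointwise

/-- The largest subgroup of `Sym(Ω)` whose orbits on `X` are those of `G`. -/
def sameOrbits {Ω : Type*} (X : Type*) [MulAction (Equiv.Perm Ω) X]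
    (G : Subgroup (Equiv.Perm Ω)) : Subgroup (Equiv.Perm Ω) where
  carrier := {f | ∀ x : X, f • x ∈ MulAction.orbit G x}
  one_mem' := fun x => by simpa using MulAction.mem_orbit_self x
  mul_mem' := by
    intro f g hf hg x
    obtain ⟨l, hl⟩ := hg x
    obtain ⟨l', hl'⟩ := hf ((g : Equiv.Perm Ω) • x)
    refine ⟨l' * l, ?_⟩
    show (↑(l' * l) : Equiv.Perm Ω) • x = (f * g) • x
    rw [show (↑(l' * l) : Equiv.Perm Ω) = (l' : Equiv.Perm Ω) * (l : Equiv.Perm Ω) from rfl,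
      mul_smul, show (l : Equiv.Perm Ω) • x = g • x from hl, mul_smul]
    exact hl'
  inv_mem' := by
    intro f hf x
    obtain ⟨l, hl⟩ := hf (f⁻¹ • x)
    have hl2 : (l : Equiv.Perm Ω) • (f⁻¹ • x) = x := by
      rw [show (l : Equiv.Perm Ω) • (f⁻¹ • x) = f • (f⁻¹ • x) from hl, smul_inv_smul]
    refine ⟨l⁻¹, ?_⟩
    show (↑l⁻¹ : Equiv.Perm Ω) • x = f⁻¹ • x
    rw [show (↑l⁻¹ : Equiv.Perm Ω) = ((l : Equiv.Perm Ω))⁻¹ from rfl, inv_smul_eq_iff]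
    exact hl2.symm

theorem mem_sameOrbits {Ω : Type*} {X : Type*} [MulAction (Equiv.Perm Ω) X]
    {G : Subgroup (Equiv.Perm Ω)} {f : Equiv.Perm Ω} :
    f ∈ sameOrbits X G ↔ ∀ x : X, f • x ∈ MulAction.orbit G x := ⟨fun h => h, fun h => h⟩

theorem le_sameOrbits {Ω : Type*} (X : Type*) [MulAction (Equiv.Perm Ω) X]
    (G : Subgroup (Equiv.Perm Ω)) : G ≤ sameOrbits X G := by
  intro g hg
  rw [mem_sameOrbits]
  exact fun x => ⟨⟨g, hg⟩, rfl⟩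

theorem orbit_sameOrbits {Ω : Type*} (X : Type*) [MulAction (Equiv.Perm Ω) X]
    (G : Subgroup (Equiv.Perm Ω)) (x : X) :
    MulAction.orbit (sameOrbits X G) x = MulAction.orbit G x := by
  apply Set.Subset.antisymm
  · rintro _ ⟨f, rfl⟩
    exact mem_sameOrbits.mp f.2 x
  · rintro _ ⟨g, rfl⟩
    exact ⟨⟨(g : Equiv.Perm Ω), le_sameOrbits X G g.2⟩, rfl⟩

theorem mClosure_le_sameOrbits {Ω : Type*} (m : ℕ) (G : Subgroup (Equiv.Perm Ω)) :
    mClosure m G ≤ sameOrbits (Fin m → Ω) G := by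
  apply sSup_le
  intro H hH f hf
  rw [mem_sameOrbits]
  intro x
  rw [← hH x]
  exact ⟨⟨f, hf⟩, rfl⟩

theorem mem_partClosure_of_forall {Ω : Type*} {k : ℕ} {L : Subgroup (Equiv.Perm Ω)}
    {σ : Equiv.Perm Ω} (h : ∀ P : OrderedPartition Ω k, σ • P ∈ MulAction.orbit L P) :
    σ ∈ partClosure k L := by
  have hmem : sameOrbits (OrderedPartition Ω k) L ∈ {H : Subgroup (Equiv.Perm Ω) |
      ∀ P : OrderedPartition Ω k, MulAction.orbit H P = MulAction.orbit L P} :=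
    fun P => orbit_sameOrbits (OrderedPartition Ω k) L P
  exact le_sSup hmem (mem_sameOrbits.mpr h)

/-- If `h = (h_1,…,h_d; h̄) ∈ (K↑L)^(m)` with `m ≥ 2`, then `h̄ ∈ L^[k]`,
where `k = min{k_m, d}`. -/
theorem top_component_mem_partClosure {Γ : Type*} [Fintype Γ] {d : ℕ}
    (K : Subgroup (Equiv.Perm Γ)) (L : Subgroup (Equiv.Perm (Fin d)))
    (m : ℕ) (hm : 2 ≤ m)
    (hs : Fin d → Equiv.Perm Γ) (σ : Equiv.Perm (Fin d))
    (hh : wreathElem hs σ ∈ mClosure m (wreathProduct K L)) :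
    σ ∈ partClosure (min (numOrbits m K) d) L := by
  classical
  -- extracting the wreath decomposition from the closure hypothesis
  have closure_key : ∀ α : Fin m → (Fin d → Γ), ∃ (gs : Fin d → Equiv.Perm Γ)
      (τ : Equiv.Perm (Fin d)), (∀ i, gs i ∈ K) ∧ τ ∈ L ∧
      ∀ (j : Fin m) (i : Fin d), gs (τ⁻¹ i) (α j (τ⁻¹ i)) = hs (σ⁻¹ i) (α j (σ⁻¹ i)) := by
    intro α
    obtain ⟨g, hg⟩ := mem_sameOrbits.mp (mClosure_le_sameOrbits m (wreathProduct K L) hh) α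
    obtain ⟨gs, τ, hgs, hτ, hgeq⟩ := g.2
    refine ⟨gs, τ, hgs, hτ, fun j i => ?_⟩
    have hg' : wreathElem gs τ • α = wreathElem hs σ • α := by
      rw [← hgeq]; exact hg
    have := congrFun (congrFun hg' j) i
    simpa [Pi.smul_apply, Equiv.Perm.smul_def, wreathElem_apply] using this
  -- each hs j₀ preserves every K-orbit on Γ^m
  have stepA : ∀ (j₀ : Fin d) (β₀ : Fin m → Γ),
      (fun j => hs j₀ (β₀ j)) ∈ MulAction.orbit K β₀ := by
    intro j₀ β₀
    obtain ⟨gs, τ, hgs, hτ, hkey⟩ := closure_key (fun j _ => β₀ j)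
    refine ⟨⟨gs (τ⁻¹ (σ j₀)), hgs _⟩, ?_⟩
    funext j
    show gs (τ⁻¹ (σ j₀)) (β₀ j) = hs j₀ (β₀ j)
    simpa using hkey j (σ j₀)
  apply mem_partClosure_of_forall
  intro P
  -- the class-index function ℓ
  have exists_idx : ∀ i : Fin d, ∃ q : Fin P.classes.length, i ∈ P.classes.get q := by
    intro i
    obtain ⟨s, hsmem, hi⟩ := P.covers i
    obtain ⟨q, hq⟩ := List.mem_iff_get.mp hsmem
    exact ⟨q, by rw [hq]; exact hi⟩
  set ℓ : Fin d → Fin P.classes.length := fun i => (exists_idx i).choose with hℓdef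
  have hℓ : ∀ i, i ∈ P.classes.get (ℓ i) := fun i => (exists_idx i).choose_spec
  have hdisj : ∀ q q' : Fin P.classes.length, q ≠ q' →
      Disjoint (P.classes.get q) (P.classes.get q') := by
    intro q q' hne
    have hp := List.pairwise_iff_getElem.mp P.pairwise_disjoint
    rcases lt_or_gt_of_ne (fun h => hne (Fin.ext h) : (q : ℕ) ≠ (q' : ℕ)) with h | h
    · simpa using hp q q' q.2 q'.2 h
    · simpa using (hp q' q q'.2 q.2 h).symm
  have huniq : ∀ (i : Fin d) (q : Fin P.classes.length), i ∈ P.classes.get q → ℓ i = q := by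
    intro i q hq
    by_contra hne
    exact Set.disjoint_left.mp (hdisj _ _ hne) (hℓ i) hq
  have hmem_iff : ∀ (x : Fin d) (q : Fin P.classes.length),
      x ∈ P.classes.get q ↔ ℓ x = q :=
    fun x q => ⟨huniq x q, fun e => e ▸ hℓ x⟩
  -- distinct orbit representatives
  have hfin : Finite (MulAction.orbitRel.Quotient K (Fin m → Γ)) := Quotient.finite _
  have : Fintype (MulAction.orbitRel.Quotient K (Fin m → Γ)) := Fintype.ofFinite _
  have hcard : Fintype.card (Fin P.classes.length) ≤
      Fintype.card (MulAction.orbitRel.Quotient K (Fin m → Γ)) := by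
    rw [Fintype.card_fin, ← Nat.card_eq_fintype_card]
    exact le_trans P.length_le (min_le_left _ _)
  obtain ⟨emb⟩ := Function.Embedding.nonempty_of_card_le hcard
  set β : Fin P.classes.length → (Fin m → Γ) := fun q => Quotient.out (emb q) with hβdef
  have hβorb : ∀ q q', β q ∈ MulAction.orbit K (β q') → q = q' := by
    intro q q' hmem
    apply emb.injective
    have h1 : (Quotient.mk'' (Quotient.out (emb q)) : MulAction.orbitRel.Quotient K (Fin m → Γ)) =
        Quotient.mk'' (Quotient.out (emb q')) := Quotient.eq''.mpr (MulAction.orbitRel_apply.mpr hmem)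
    exact ((Quotient.out_eq' (emb q)).symm.trans h1).trans (Quotient.out_eq' (emb q'))
  -- the tuple α whose rows are the representatives indexed by classes
  obtain ⟨gs, τ, hgs, hτ, hkey⟩ := closure_key (fun j i => β (ℓ i) j)
  have hmatch : ∀ i, ℓ (σ⁻¹ i) = ℓ (τ⁻¹ i) := by
    intro i
    have e1 : (fun j => hs (σ⁻¹ i) (β (ℓ (σ⁻¹ i)) j)) ∈
        MulAction.orbit K (β (ℓ (σ⁻¹ i))) := stepA _ _
    have e2 : (fun j => hs (σ⁻¹ i) (β (ℓ (σ⁻¹ i)) j)) ∈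
        MulAction.orbit K (β (ℓ (τ⁻¹ i))) := by
      refine ⟨⟨gs (τ⁻¹ i), hgs _⟩, ?_⟩
      funext j
      show gs (τ⁻¹ i) (β (ℓ (τ⁻¹ i)) j) = hs (σ⁻¹ i) (β (ℓ (σ⁻¹ i)) j)
      exact hkey j i
    have horb : MulAction.orbit K (β (ℓ (σ⁻¹ i))) = MulAction.orbit K (β (ℓ (τ⁻¹ i))) :=
      (MulAction.orbit_eq_iff.mpr e1).symm.trans (MulAction.orbit_eq_iff.mpr e2)
    exact hβorb _ _ (MulAction.orbit_eq_iff.mp horb)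
  -- conclude: σ • P = τ • P
  refine ⟨⟨τ, hτ⟩, ?_⟩
  show τ • P = σ • P
  apply OrderedPartition.ext'
  rw [OrderedPartition.smul_classes, OrderedPartition.smul_classes]
  apply List.ext_get (by simp)
  intro n h1 h2
  simp only [List.get_eq_getElem, List.getElem_map]
  set q : Fin P.classes.length := ⟨n, by simpa using h1⟩
  rw [show P.classes[n]'(by simpa using h1) = P.classes.get q from rfl]
  ext i
  simp only [Set.mem_image]
  constructor
  · rintro ⟨x, hx, rfl⟩
    refine ⟨σ⁻¹ (τ x), ?_, by simp⟩
    rw [hmem_iff] at hx ⊢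
    rw [← hx]
    simpa using hmatch (τ x)
  · rintro ⟨x, hx, rfl⟩
    refine ⟨τ⁻¹ (σ x), ?_, by simp⟩
    rw [hmem_iff] at hx ⊢
    rw [← hx]
    simpa using (hmatch (σ x)).symm
end

section
/- Let Γ and Δ = {1,…,d} be finite sets. Then the 2-closure of the wreath product of symmetric groups in product action is itself: (Sym(Γ) ↑ Sym(Δ))^(2) = Sym(Γ) ↑ Sym(Δ). -/
open Equiv MulAction Pointwise

/-! ### Auxiliary development for the 2-closure theorem -/

section Aux

variable {Γ : Type*} {d : ℕ} [DecidableEq Γ]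

/-- The set of coordinates at which two tuples differ. -/
def diffs (a b : Fin d → Γ) : Finset (Fin d) :=
  Finset.univ.filter fun i => a i ≠ b i

theorem mem_diffs {a b : Fin d → Γ} {i : Fin d} : i ∈ diffs a b ↔ a i ≠ b i := by
  simp [diffs]

theorem diffs_eq_empty_iff {a b : Fin d → Γ} : diffs a b = ∅ ↔ a = b := by
  simp [Finset.eq_empty_iff_forall_notMem, mem_diffs, funext_iff]

theorem apply_eq_of_diffs_singleton {x y : Fin d → Γ} {j : Fin d}
    (h : diffs x y = {j}) {k : Fin d} (hk : k ≠ j) : x k = y k := by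
  by_contra hc
  have := mem_diffs.mpr hc
  rw [h, Finset.mem_singleton] at this
  exact hk this

theorem eq_singleton_of_mem_card_one {s : Finset (Fin d)} {j : Fin d}
    (hc : s.card = 1) (hj : j ∈ s) : s = {j} := by
  obtain ⟨a, rfl⟩ := Finset.card_eq_one.mp hc
  rw [Finset.mem_singleton] at hj
  rw [hj]

theorem two_le_card_diffs {x y : Fin d → Γ} {j k : Fin d} (hjk : j ≠ k)
    (hj : x j ≠ y j) (hk : x k ≠ y k) : 2 ≤ (diffs x y).card := by
  have hsub : ({j, k} : Finset (Fin d)) ⊆ diffs x y := by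
    intro c hc
    rcases Finset.mem_insert.mp hc with rfl | hc
    · exact mem_diffs.mpr hj
    · rw [Finset.mem_singleton] at hc; subst hc; exact mem_diffs.mpr hk
  calc 2 = ({j, k} : Finset (Fin d)).card := (Finset.card_pair hjk).symm
    _ ≤ _ := Finset.card_le_card hsub

theorem diffs_wreath (gs : Fin d → Equiv.Perm Γ) (σ : Equiv.Perm (Fin d)) (a b : Fin d → Γ) :
    diffs (wreathElem gs σ a) (wreathElem gs σ b) = (diffs a b).map σ.toEmbedding := by
  ext j
  rw [Finset.mem_map_equiv]
  simp only [mem_diffs, wreathElem_apply]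
  exact not_congr (Equiv.apply_eq_iff_eq (gs (σ⁻¹ j)))

theorem card_diffs_of_mem {K : Subgroup (Equiv.Perm Γ)} {L : Subgroup (Equiv.Perm (Fin d))}
    {g : Equiv.Perm (Fin d → Γ)} (hg : g ∈ wreathProduct K L) (a b : Fin d → Γ) :
    (diffs (g a) (g b)).card = (diffs a b).card := by
  obtain ⟨gs, σ, -, -, rfl⟩ := hg
  rw [diffs_wreath, Finset.card_map]

theorem diffs_update_left {a : Fin d → Γ} {i : Fin d} {γ : Γ} (h : γ ≠ a i) :
    diffs (Function.update a i γ) a = {i} := by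
  ext j
  simp only [mem_diffs, Finset.mem_singleton, Function.update_apply]
  split_ifs with hj
  · subst hj; simp [h]
  · simp [hj]

theorem mem_wreath_of_fix [Fintype Γ] [Nontrivial Γ] (ω₀ : Fin d → Γ)
    (f : Equiv.Perm (Fin d → Γ)) (hfix : f ω₀ = ω₀)
    (hiso : ∀ a b : Fin d → Γ, (diffs (f a) (f b)).card = (diffs a b).card) :
    f ∈ wreathProduct (⊤ : Subgroup (Equiv.Perm Γ)) (⊤ : Subgroup (Equiv.Perm (Fin d))) := by
  choose γ₀ hγ₀ using fun i : Fin d => exists_ne (ω₀ i)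
  -- the image of a point at distance one from `ω₀` is at distance one from `ω₀`
  have hdu : ∀ (i : Fin d) (γ : Γ), γ ≠ ω₀ i →
      (diffs (f (Function.update ω₀ i γ)) ω₀).card = 1 := by
    intro i γ h
    have h2 := hiso (Function.update ω₀ i γ) ω₀
    rw [hfix, diffs_update_left h, Finset.card_singleton] at h2
    exact h2
  -- the changed coordinate does not depend on the value γ
  have hwd : ∀ (i : Fin d) (γ γ' : Γ) (j j' : Fin d), γ ≠ ω₀ i → γ' ≠ ω₀ i →
      diffs (f (Function.update ω₀ i γ)) ω₀ = {j} →
      diffs (f (Function.update ω₀ i γ')) ω₀ = {j'} → j = j' := by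
    intro i γ γ' j j' hγ hγ' hj hj'
    by_cases hγγ : γ = γ'
    · subst hγγ; rw [hj] at hj'; exact Finset.singleton_injective hj'
    by_contra hne
    have h1 : (diffs (f (Function.update ω₀ i γ)) (f (Function.update ω₀ i γ'))).card = 1 := by
      rw [hiso]
      have : diffs (Function.update ω₀ i γ) (Function.update ω₀ i γ') = {i} := by
        ext k
        simp only [mem_diffs, Finset.mem_singleton, Function.update_apply]
        split_ifs with hk
        · subst hk; simp [hγγ]
        · simp [hk]
      rw [this, Finset.card_singleton]
    have hjm : f (Function.update ω₀ i γ) j ≠ f (Function.update ω₀ i γ') j := by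
      have e1 : f (Function.update ω₀ i γ) j ≠ ω₀ j := by
        have : j ∈ diffs (f (Function.update ω₀ i γ)) ω₀ := by rw [hj]; exact Finset.mem_singleton_self j
        exact mem_diffs.mp this
      have e2 : f (Function.update ω₀ i γ') j = ω₀ j :=
        apply_eq_of_diffs_singleton hj' hne
      rw [e2]; exact e1
    have hjm' : f (Function.update ω₀ i γ) j' ≠ f (Function.update ω₀ i γ') j' := by
      have e1 : f (Function.update ω₀ i γ) j' = ω₀ j' :=
        apply_eq_of_diffs_singleton hj (Ne.symm hne)
      have e2 : f (Function.update ω₀ i γ') j' ≠ ω₀ j' := by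
        have : j' ∈ diffs (f (Function.update ω₀ i γ')) ω₀ := by
          rw [hj']; exact Finset.mem_singleton_self j'
        exact mem_diffs.mp this
      rw [e1]; exact fun hc => e2 hc.symm
    have := two_le_card_diffs hne hjm hjm'
    omega
  -- define the coordinate permutation
  have hex : ∀ i : Fin d, ∃ j, diffs (f (Function.update ω₀ i (γ₀ i))) ω₀ = {j} :=
    fun i => Finset.card_eq_one.mp (hdu i _ (hγ₀ i))
  choose σ₀ hσ₀ using hex
  have hsing : ∀ (i : Fin d) (γ : Γ), γ ≠ ω₀ i →
      diffs (f (Function.update ω₀ i γ)) ω₀ = {σ₀ i} := by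
    intro i γ hγ
    obtain ⟨j, hj⟩ := Finset.card_eq_one.mp (hdu i γ hγ)
    have := hwd i γ (γ₀ i) j (σ₀ i) hγ (hγ₀ i) hj (hσ₀ i)
    rw [← this]; exact hj
  have hinj : Function.Injective σ₀ := by
    intro i i' h
    by_contra hne
    have h2 : 2 ≤ (diffs (f (Function.update ω₀ i (γ₀ i)))
        (f (Function.update ω₀ i' (γ₀ i')))).card := by
      rw [hiso]
      exact two_le_card_diffs hne
        (by rw [Function.update_self, Function.update_of_ne hne]; exact hγ₀ i)
        (by rw [Function.update_of_ne (Ne.symm hne), Function.update_self]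
            exact fun hc => hγ₀ i' hc.symm)
    have hsub : diffs (f (Function.update ω₀ i (γ₀ i)))
        (f (Function.update ω₀ i' (γ₀ i'))) ⊆ {σ₀ i} := by
      intro k hk
      rw [Finset.mem_singleton]
      by_contra hki
      have e1 := apply_eq_of_diffs_singleton (hσ₀ i) hki
      have e2 := apply_eq_of_diffs_singleton (hσ₀ i') (h ▸ hki)
      exact (mem_diffs.mp hk) (e1.trans e2.symm)
    have := Finset.card_le_card hsub
    rw [Finset.card_singleton] at this
    omega
  let σ : Equiv.Perm (Fin d) := Equiv.ofBijective σ₀ (Finite.injective_iff_bijective.mp hinj)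
  have hσapp : ∀ x, σ x = σ₀ x := fun x => rfl
  -- define the coordinate maps
  let kfun : Fin d → Γ → Γ := fun i γ => f (Function.update ω₀ i γ) (σ₀ i)
  have hbase : ∀ i : Fin d, kfun i (ω₀ i) = ω₀ (σ₀ i) := by
    intro i
    show f (Function.update ω₀ i (ω₀ i)) (σ₀ i) = ω₀ (σ₀ i)
    rw [Function.update_eq_self, hfix]
  have hval : ∀ (i : Fin d) (γ : Γ),
      f (Function.update ω₀ i γ) = Function.update ω₀ (σ₀ i) (kfun i γ) := by
    intro i γ
    by_cases hγ : γ = ω₀ i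
    · subst hγ
      simp only [hbase, Function.update_eq_self, hfix]
    · funext j
      by_cases hj : j = σ₀ i
      · subst hj; rw [Function.update_self]
      · rw [Function.update_of_ne hj]
        exact apply_eq_of_diffs_singleton (hsing i γ hγ) hj
  have hkinj : ∀ i, Function.Injective (kfun i) := by
    intro i γ γ' h
    have e : f (Function.update ω₀ i γ) = f (Function.update ω₀ i γ') := by
      rw [hval, hval, h]
    have := f.injective e
    have := congrFun this i
    rwa [Function.update_self, Function.update_self] at this
  let ks : Fin d → Equiv.Perm Γ :=
    fun i => Equiv.ofBijective (kfun i) (Finite.injective_iff_bijective.mp (hkinj i))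
  have hksapp : ∀ i γ, ks i γ = kfun i γ := fun i γ => rfl
  let w : Equiv.Perm (Fin d → Γ) := wreathElem ks σ
  have hwW : w ∈ wreathProduct (⊤ : Subgroup (Equiv.Perm Γ))
      (⊤ : Subgroup (Equiv.Perm (Fin d))) :=
    ⟨ks, σ, fun _ => Subgroup.mem_top _, Subgroup.mem_top _, rfl⟩
  -- w agrees with f on the ball of radius one around ω₀
  have hw0 : w ω₀ = ω₀ := by
    funext j
    show ks (σ⁻¹ j) (ω₀ (σ⁻¹ j)) = ω₀ j
    rw [hksapp, hbase, ← hσapp, Equiv.Perm.coe_inv, Equiv.apply_symm_apply]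
  have hwu : ∀ (i : Fin d) (γ : Γ),
      w (Function.update ω₀ i γ) = f (Function.update ω₀ i γ) := by
    intro i γ
    rw [hval]
    funext j
    show ks (σ⁻¹ j) (Function.update ω₀ i γ (σ⁻¹ j)) = Function.update ω₀ (σ₀ i) (kfun i γ) j
    by_cases hj : j = σ₀ i
    · subst hj
      have hij : σ⁻¹ (σ₀ i) = i := by rw [← hσapp, Equiv.Perm.coe_inv, Equiv.symm_apply_apply]
      rw [hij, Function.update_self, Function.update_self, hksapp]
    · have hji : σ⁻¹ j ≠ i := by
        intro hc
        apply hj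
        rw [← hc, ← hσapp, Equiv.Perm.coe_inv, Equiv.apply_symm_apply]
      rw [Function.update_of_ne hji, Function.update_of_ne hj, hksapp, hbase, ← hσapp,
        Equiv.Perm.coe_inv, Equiv.apply_symm_apply]
  -- the correction F fixes the ball of radius one and is an isometry; show F = 1
  set F : Equiv.Perm (Fin d → Γ) := w⁻¹ * f with hF
  have hFiso : ∀ a b : Fin d → Γ, (diffs (F a) (F b)).card = (diffs a b).card := by
    intro a b
    show (diffs (w⁻¹ (f a)) (w⁻¹ (f b))).card = _
    rw [card_diffs_of_mem (inv_mem hwW), hiso]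
  have hF0 : F ω₀ = ω₀ := by
    show w⁻¹ (f ω₀) = ω₀
    rw [hfix, ← hw0, Equiv.Perm.coe_inv, Equiv.symm_apply_apply, hw0]
  have hFu : ∀ (i : Fin d) (γ : Γ),
      F (Function.update ω₀ i γ) = Function.update ω₀ i γ := by
    intro i γ
    show w⁻¹ (f (Function.update ω₀ i γ)) = Function.update ω₀ i γ
    rw [← hwu, Equiv.Perm.coe_inv, Equiv.symm_apply_apply]
  have hFall : ∀ (n : ℕ) (a : Fin d → Γ), (diffs a ω₀).card ≤ n → F a = a := by
    intro n
    induction n with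
    | zero =>
      intro a ha
      have : a = ω₀ := diffs_eq_empty_iff.mp (Finset.card_eq_zero.mp (Nat.le_zero.mp ha))
      rw [this]; exact hF0
    | succ n ih =>
      intro a ha
      by_cases hle : (diffs a ω₀).card ≤ n
      · exact ih a hle
      have hcard : (diffs a ω₀).card = n + 1 := le_antisymm ha (by omega)
      rcases Nat.eq_zero_or_pos n with hn | hn
      · subst hn
        obtain ⟨i, hi⟩ := Finset.card_eq_one.mp hcard
        have ha' : a = Function.update ω₀ i (a i) := by
          funext j
          by_cases hj : j = i
          · subst hj; rw [Function.update_self]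
          · rw [Function.update_of_ne hj]
            by_contra hc
            have := mem_diffs.mpr hc
            rw [hi, Finset.mem_singleton] at this
            exact hj this
        rw [ha']; exact hFu i (a i)
      · obtain ⟨i₁, h₁, i₂, h₂, h12⟩ := Finset.one_lt_card.mp (by omega : 1 < (diffs a ω₀).card)
        have h₁' : a i₁ ≠ ω₀ i₁ := mem_diffs.mp h₁
        have h₂' : a i₂ ≠ ω₀ i₂ := mem_diffs.mp h₂
        set ν₁ := Function.update a i₁ (ω₀ i₁) with hν₁
        set ν₂ := Function.update a i₂ (ω₀ i₂) with hν₂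
        have hdν : ∀ (i : Fin d), a i ≠ ω₀ i →
            diffs (Function.update a i (ω₀ i)) ω₀ = (diffs a ω₀).erase i := by
          intro i hi
          ext k
          simp only [mem_diffs, Finset.mem_erase, Function.update_apply]
          split_ifs with hk
          · subst hk; simp
          · simp [hk, mem_diffs]
        have hF₁ : F ν₁ = ν₁ := by
          apply ih
          rw [hν₁, hdν i₁ h₁', Finset.card_erase_of_mem h₁, hcard]
          omega
        have hF₂ : F ν₂ = ν₂ := by
          apply ih
          rw [hν₂, hdν i₂ h₂', Finset.card_erase_of_mem h₂, hcard]
          omega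
        have hda₁ : diffs a ν₁ = {i₁} := by
          have : ν₁ = Function.update a i₁ (ω₀ i₁) := rfl
          ext k
          simp only [mem_diffs, Finset.mem_singleton, this, Function.update_apply]
          split_ifs with hk
          · subst hk; simp [h₁']
          · simp [hk]
        have hda₂ : diffs a ν₂ = {i₂} := by
          ext k
          simp only [mem_diffs, Finset.mem_singleton, hν₂, Function.update_apply]
          split_ifs with hk
          · subst hk; simp [h₂']
          · simp [hk]
        have hx₁ : (diffs (F a) ν₁).card = 1 := by
          rw [← hF₁, hFiso, hda₁, Finset.card_singleton]
        have hx₂ : (diffs (F a) ν₂).card = 1 := by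
          rw [← hF₂, hFiso, hda₂, Finset.card_singleton]
        have hx0 : (diffs (F a) ω₀).card = n + 1 := by
          rw [← hF0, hFiso, hcard]
        set x := F a with hxdef
        have hν₁i₁ : ν₁ i₁ = ω₀ i₁ := Function.update_self _ _ _
        have hν₂i₂ : ν₂ i₂ = ω₀ i₂ := Function.update_self _ _ _
        have hν₁i₂ : ν₁ i₂ = a i₂ := Function.update_of_ne (Ne.symm h12) _ _
        have hν₂i₁ : ν₂ i₁ = a i₁ := Function.update_of_ne h12 _ _
        have hout : ∀ j, j ≠ i₁ → j ≠ i₂ → x j = a j := by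
          intro j hj₁ hj₂
          by_contra hne
          have hν₁j : ν₁ j = a j := Function.update_of_ne hj₁ _ _
          have hν₂j : ν₂ j = a j := Function.update_of_ne hj₂ _ _
          have hs₁ : diffs x ν₁ = {j} :=
            eq_singleton_of_mem_card_one hx₁ (mem_diffs.mpr (by rw [hν₁j]; exact hne))
          have hs₂ : diffs x ν₂ = {j} :=
            eq_singleton_of_mem_card_one hx₂ (mem_diffs.mpr (by rw [hν₂j]; exact hne))
          have e1 : x i₁ = ω₀ i₁ := by
            have := apply_eq_of_diffs_singleton hs₁ (fun hc => hj₁ hc.symm)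
            rwa [hν₁i₁] at this
          have e2 : x i₁ = a i₁ := by
            have := apply_eq_of_diffs_singleton hs₂ (fun hc => hj₁ hc.symm)
            rwa [hν₂i₁] at this
          exact h₁' (e2.symm.trans e1)
        by_cases hxi₁ : x i₁ = ω₀ i₁
        · exfalso
          have hd₂ : x i₁ ≠ ν₂ i₁ := by rw [hν₂i₁, hxi₁]; exact fun hc => h₁' hc.symm
          have hs₂ : diffs x ν₂ = {i₁} := eq_singleton_of_mem_card_one hx₂ (mem_diffs.mpr hd₂)
          have hxi₂ : x i₂ = ω₀ i₂ := by
            have := apply_eq_of_diffs_singleton hs₂ (Ne.symm h12)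
            rwa [hν₂i₂] at this
          have hsub : diffs x ω₀ ⊆ ((diffs a ω₀).erase i₁).erase i₂ := by
            intro k hk
            have hxk := mem_diffs.mp hk
            have hk₁ : k ≠ i₁ := fun hc => by subst hc; exact hxk hxi₁
            have hk₂ : k ≠ i₂ := fun hc => by subst hc; exact hxk hxi₂
            rw [Finset.mem_erase, Finset.mem_erase]
            refine ⟨hk₂, hk₁, mem_diffs.mpr ?_⟩
            rw [← hout k hk₁ hk₂]; exact hxk
          have hle2 := Finset.card_le_card hsub
          rw [Finset.card_erase_of_mem (Finset.mem_erase.mpr ⟨Ne.symm h12, h₂⟩),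
            Finset.card_erase_of_mem h₁, hcard] at hle2
          omega
        · have hs₁ : diffs x ν₁ = {i₁} :=
            eq_singleton_of_mem_card_one hx₁ (mem_diffs.mpr (by rw [hν₁i₁]; exact hxi₁))
          have hxi₂ : x i₂ = a i₂ := by
            have := apply_eq_of_diffs_singleton hs₁ (Ne.symm h12)
            rwa [hν₁i₂] at this
          have hd₂ : x i₂ ≠ ν₂ i₂ := by rw [hν₂i₂, hxi₂]; exact h₂'
          have hs₂ : diffs x ν₂ = {i₂} := eq_singleton_of_mem_card_one hx₂ (mem_diffs.mpr hd₂)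
          have hxi₁' : x i₁ = a i₁ := by
            have := apply_eq_of_diffs_singleton hs₂ h12
            rwa [hν₂i₁] at this
          funext j
          by_cases hj₁ : j = i₁
          · subst hj₁; exact hxi₁'
          by_cases hj₂ : j = i₂
          · subst hj₂; exact hxi₂
          exact hout j hj₁ hj₂
  have hfw : f = w := by
    apply Equiv.ext
    intro a
    have hFa : F a = a := hFall (diffs a ω₀).card a le_rfl
    have : w⁻¹ (f a) = a := hFa
    calc f a = w (w⁻¹ (f a)) := (Equiv.apply_symm_apply w (f a)).symm
      _ = w a := by rw [this]
  rw [hfw]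
  exact hwW

theorem mem_wreath_of_pairs [Fintype Γ] (f : Equiv.Perm (Fin d → Γ))
    (hf : ∀ a b : Fin d → Γ, ∃ g ∈ wreathProduct (⊤ : Subgroup (Equiv.Perm Γ))
      (⊤ : Subgroup (Equiv.Perm (Fin d))), g a = f a ∧ g b = f b) :
    f ∈ wreathProduct (⊤ : Subgroup (Equiv.Perm Γ)) (⊤ : Subgroup (Equiv.Perm (Fin d))) := by
  rcases subsingleton_or_nontrivial (Fin d → Γ) with hs | hnt
  · have : f = 1 := Equiv.ext fun x => Subsingleton.elim _ _
    rw [this]; exact one_mem _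
  · have hΓ : Nontrivial Γ := by
      obtain ⟨a, b, hab⟩ := exists_pair_ne (Fin d → Γ)
      obtain ⟨i, hi⟩ := Function.ne_iff.mp hab
      exact ⟨a i, b i, hi⟩
    have hne : Nonempty (Fin d → Γ) := inferInstance
    obtain ⟨ω₀⟩ := hne
    obtain ⟨g₀, hg₀, hg₀ω, -⟩ := hf ω₀ ω₀
    have hiso : ∀ a b : Fin d → Γ, (diffs (f a) (f b)).card = (diffs a b).card := by
      intro a b
      obtain ⟨g, hg, hga, hgb⟩ := hf a b
      rw [← hga, ← hgb, card_diffs_of_mem hg]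
    have hFiso : ∀ a b : Fin d → Γ,
        (diffs ((g₀⁻¹ * f) a) ((g₀⁻¹ * f) b)).card = (diffs a b).card := by
      intro a b
      have h1 : ((g₀⁻¹ * f) a) = g₀⁻¹ (f a) := rfl
      have h2 : ((g₀⁻¹ * f) b) = g₀⁻¹ (f b) := rfl
      rw [h1, h2, card_diffs_of_mem (inv_mem hg₀), hiso]
    have hFfix : (g₀⁻¹ * f) ω₀ = ω₀ := by
      show g₀⁻¹ (f ω₀) = ω₀
      rw [← hg₀ω, Equiv.Perm.coe_inv, Equiv.symm_apply_apply]
    have hF := mem_wreath_of_fix ω₀ (g₀⁻¹ * f) hFfix hFiso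
    have := mul_mem hg₀ hF
    rwa [mul_inv_cancel_left] at this

end Aux

/-- `(Sym(Γ) ↑ Sym(Δ))^(2) = Sym(Γ) ↑ Sym(Δ)`. -/
theorem mClosure_two_wreath_top {Γ : Type*} [Fintype Γ] {d : ℕ} :
    mClosure 2 (wreathProduct (⊤ : Subgroup (Equiv.Perm Γ))
        (⊤ : Subgroup (Equiv.Perm (Fin d)))) =
      wreathProduct (⊤ : Subgroup (Equiv.Perm Γ)) (⊤ : Subgroup (Equiv.Perm (Fin d))) := by
  classical
  set W := wreathProduct (⊤ : Subgroup (Equiv.Perm Γ)) (⊤ : Subgroup (Equiv.Perm (Fin d)))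
    with hW
  apply le_antisymm
  · apply sSup_le
    rintro H hH f hf
    apply mem_wreath_of_pairs f
    intro a b
    have h1 : (⟨f, hf⟩ : H) • (![a, b] : Fin 2 → (Fin d → Γ)) ∈
        MulAction.orbit H (![a, b] : Fin 2 → (Fin d → Γ)) := MulAction.mem_orbit _ _
    rw [hH] at h1
    obtain ⟨g, hg⟩ := MulAction.mem_orbit_iff.mp h1
    refine ⟨(g : Equiv.Perm (Fin d → Γ)), g.2, ?_, ?_⟩
    · have := congrFun hg 0
      simpa [Pi.smul_apply, Subgroup.smul_def, Equiv.Perm.smul_def] using this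
    · have := congrFun hg 1
      simpa [Pi.smul_apply, Subgroup.smul_def, Equiv.Perm.smul_def] using this
  · exact le_sSup fun α => rfl
end
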